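/- Steerability of a convolution from an equivariant kernel: if a kernel k : ℝ^c → ℝ^{c_out × c_in} satisfies k(gx) = ρ_out(g) k(x) ρ_in(g)^{-1} for all g in a group G acting on ℝ^c by measure-preserving linear maps, then the convolution operator Φ(f)(x) = ∫ k(y) f(x − y) dy satisfies Φ(π_in(g)f) = π_out(g)Φ(f), where (π_i(g)f)(x) = ρ_i(g) f(g^{-1}x). -/
import Mathlib


open MeasureTheory

/-- Steerability of a convolution built from an equivariant kernel: if the kernel
satisfies k(gx) = ρ_out(g) k(x) ρ_in(g)⁻¹ and G acts on ℝ^c by measure-preserving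
linear maps, then Φ(f)(x) = ∫ k(y) f(x − y) dy satisfies Φ(π_in(g)f) = π_out(g)Φ(f). -/
theorem steerable_convolution {G : Type*} [Group G] (c cin cout : ℕ)
    (A : G →* ((Fin c → ℝ) ≃ₗ[ℝ] (Fin c → ℝ)))
    (hA : ∀ g : G, MeasurePreserving (A g) (volume : Measure (Fin c → ℝ)) volume)
    (ρin : G →* Matrix.GeneralLinearGroup (Fin cin) ℝ)
    (ρout : G →* Matrix.GeneralLinearGroup (Fin cout) ℝ)
    (k : (Fin c → ℝ) → Matrix (Fin cout) (Fin cin) ℝ)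
    (hk : ∀ (g : G) (x : Fin c → ℝ),
      k (A g x) = (ρout g : Matrix (Fin cout) (Fin cout) ℝ) * k x *
        ((ρin g)⁻¹ : Matrix (Fin cin) (Fin cin) ℝ))
    (f : (Fin c → ℝ) → (Fin cin → ℝ))
    (hf : ∀ (g : G) (x : Fin c → ℝ),
      Integrable (fun y => (k y).mulVec
        (((ρin g : Matrix (Fin cin) (Fin cin) ℝ)).mulVec (f (A g⁻¹ (x - y)))))
        (volume : Measure (Fin c → ℝ)))
    (hf' : ∀ x : Fin c → ℝ,
      Integrable (fun y => (k y).mulVec (f (x - y))) (volume : Measure (Fin c → ℝ)))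
    (g : G) (x : Fin c → ℝ) :
    (∫ y, (k y).mulVec
        ((ρin g : Matrix (Fin cin) (Fin cin) ℝ).mulVec (f (A g⁻¹ (x - y))))) =
      (ρout g : Matrix (Fin cout) (Fin cout) ℝ).mulVec
        (∫ y, (k y).mulVec (f (A g⁻¹ x - y))) := by
  have hemb : MeasurableEmbedding (A g) :=
    (LinearEquiv.toContinuousLinearEquiv (A g)).toHomeomorph.measurableEmbedding
  have hchg :
      (∫ y, (k y).mulVec
          ((ρin g : Matrix (Fin cin) (Fin cin) ℝ).mulVec (f (A g⁻¹ (x - y))))) =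
      ∫ y, (k (A g y)).mulVec
          ((ρin g : Matrix (Fin cin) (Fin cin) ℝ).mulVec (f (A g⁻¹ (x - A g y)))) :=
    ((hA g).integral_comp hemb _).symm
  rw [hchg]
  have hpt : ∀ y : Fin c → ℝ,
      (k (A g y)).mulVec
          ((ρin g : Matrix (Fin cin) (Fin cin) ℝ).mulVec (f (A g⁻¹ (x - A g y)))) =
      (ρout g : Matrix (Fin cout) (Fin cout) ℝ).mulVec ((k y).mulVec (f (A g⁻¹ x - y))) := by
    intro y
    have harg : A g⁻¹ (x - A g y) = A g⁻¹ x - y := by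
      rw [map_sub]
      congr 1
      have : (A g⁻¹) ((A g) y) = (A g⁻¹ * A g) y := rfl
      rw [this, ← map_mul, inv_mul_cancel, map_one]
      rfl
    rw [harg, hk g y, Matrix.mulVec_mulVec, Matrix.mulVec_mulVec, Matrix.mul_assoc,
      Matrix.mul_assoc]
    congr 2
    have : ((ρin g)⁻¹ : Matrix (Fin cin) (Fin cin) ℝ) * (ρin g : Matrix (Fin cin) (Fin cin) ℝ)
        = 1 := by
      rw [← Matrix.coe_units_inv, ← Units.val_mul, inv_mul_cancel, Units.val_one]
    rw [this, Matrix.mul_one]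
  simp only [hpt]
  -- pull the linear map out of the integral
  have := (LinearMap.toContinuousLinearMap
      ((ρout g : Matrix (Fin cout) (Fin cout) ℝ).mulVecLin)).integral_comp_comm
      (hf' (A g⁻¹ x))
  simpa using this
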